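/- Let n ≥ 1 and let N > 0 be real. There is a constant C > 0, depending only on n and N, such that for all j, j' ∈ ℤ and all k, k', w ∈ ℤ^n with Q_{j',k'} ⊆ Q^w_{j,k}, one has (1+|2^{j−j'}k'−k|)^{−N} ≤ C (1+|w|)^{−N}. -/
import Mathlib


noncomputable section

open MeasureTheory Real Complex
open scoped ENNReal NNReal

/-- `ℝⁿ` modeled as functions `Fin n → ℝ`. -/
abbrev Vec (n : ℕ) : Type := Fin n → ℝ

/-- Integer lattice `ℤⁿ`. -/
abbrev IVec (n : ℕ) : Type := Fin n → ℤ

/-- The index set `E_n = {0,1}ⁿ \ {0}`, with `{0,1}ⁿ` modeled as `Fin n → Bool`. -/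
abbrev En (n : ℕ) : Type := {ε : Fin n → Bool // ε ≠ fun _ => false}

/-- The Euclidean norm on `Vec n`. -/
def enorm2 {n : ℕ} (x : Vec n) : ℝ := Real.sqrt (∑ i, (x i) ^ 2)

/-- The dyadic cube `Q_{j,k} = {x : 2^j x − k ∈ [0,1)ⁿ}` of side length `2^{−j}`. -/
def dyadicCube (n : ℕ) (j : ℤ) (k : IVec n) : Set (Vec n) :=
  {x | ∀ i, (k i : ℝ) ≤ (2:ℝ) ^ j * x i ∧ (2:ℝ) ^ j * x i < (k i : ℝ) + 1}

/-- `Q^w_{j,k} = 2^{8−j} w + tilde-Q_{j,k}`, where `tilde-Q_{j,k}` is the unique dyadic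
cube of side length `2^{8−j}` containing `Q_{j,k}` (its index is `⌊k/2^8⌋`). -/
def QW (n : ℕ) (j : ℤ) (k w : IVec n) : Set (Vec n) :=
  dyadicCube n (j - 8) (fun i => Int.fdiv (k i) 256 + w i)

lemma enorm2_nonneg {n : ℕ} (x : Vec n) : 0 ≤ enorm2 x := Real.sqrt_nonneg _

lemma enorm2_smul {n : ℕ} (c : ℝ) (x : Vec n) :
    enorm2 (fun i => c * x i) = |c| * enorm2 x := by
  simp only [enorm2, mul_pow, ← Finset.mul_sum]
  rw [Real.sqrt_mul (sq_nonneg c), Real.sqrt_sq_eq_abs]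

lemma enorm2_triangle {n : ℕ} (x y : Vec n) :
    enorm2 (fun i => x i + y i) ≤ enorm2 x + enorm2 y := by
  have h : ∀ z : Vec n, enorm2 z = ‖(WithLp.equiv 2 (Fin n → ℝ)).symm z‖ := by
    intro z
    rw [EuclideanSpace.norm_eq]
    simp [enorm2, sq_abs]
  rw [h, h, h]
  exact norm_add_le _ _

/-- if `Q_{j',k'} ⊆ Q^w_{j,k}` then
`(1+|2^{j−j'}k'−k|)^{−N} ≤ C (1+|w|)^{−N}`. -/
theorem statement6 (n : ℕ) (hn : 1 ≤ n) (N : ℝ) (hN : 0 < N) :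
    ∃ C : ℝ, 0 < C ∧ ∀ (j j' : ℤ) (k k' w : IVec n),
      dyadicCube n j' k' ⊆ QW n j k w →
      (1 + enorm2 (fun i => (2:ℝ) ^ (j - j') * (k' i : ℝ) - (k i : ℝ))) ^ (-N) ≤
        C * (1 + enorm2 (fun i => ((w i : ℝ)))) ^ (-N) := by
  have hsn : (0:ℝ) ≤ Real.sqrt n := Real.sqrt_nonneg n
  refine ⟨(1 + Real.sqrt n) ^ N, Real.rpow_pos_of_pos (by linarith) N, ?_⟩
  intro j j' k k' w hsub
  set a : Vec n := fun i => (2:ℝ) ^ (j - j') * (k' i : ℝ) - (k i : ℝ) with ha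
  set wv : Vec n := fun i => ((w i : ℝ)) with hwv
  -- the point 2^{-j'} k' lies in Q_{j',k'}
  have hx : (fun i => (2:ℝ) ^ (-j') * (k' i : ℝ)) ∈ dyadicCube n j' k' := by
    intro i
    have h2 : (2:ℝ) ^ j' * ((2:ℝ) ^ (-j') * (k' i : ℝ)) = (k' i : ℝ) := by
      rw [← mul_assoc, ← zpow_add₀ (two_ne_zero), add_neg_cancel, zpow_zero, one_mul]
    rw [h2]
    exact ⟨le_refl _, lt_add_one _⟩
  have hx2 := hsub hx
  -- coordinatewise bound  |a i - 256 * w i| ≤ 256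
  have key : ∀ i, |a i - 256 * wv i| ≤ 256 := by
    intro i
    obtain ⟨h1, h2⟩ := hx2 i
    set t : ℝ := (2:ℝ) ^ (j - 8) * ((2:ℝ) ^ (-j') * (k' i : ℝ)) with htdef
    have ht : (2:ℝ) ^ (j - j') * (k' i : ℝ) = 256 * t := by
      rw [htdef, show j - j' = (j - 8) + -j' + 8 by ring, zpow_add₀ (two_ne_zero),
        zpow_add₀ (two_ne_zero)]
      norm_num
      ring
    have hfd : Int.fdiv (k i) 256 = k i / 256 := Int.fdiv_eq_ediv_of_nonneg _ (by norm_num)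
    have hmod : 256 * (k i / 256) + k i % 256 = k i := Int.mul_ediv_add_emod _ _
    have hr0 : (0:ℤ) ≤ k i % 256 := Int.emod_nonneg _ (by norm_num)
    have hr1 : k i % 256 < 256 := Int.emod_lt_of_pos _ (by norm_num)
    -- cast the int facts
    have hmodR : 256 * ((k i / 256 : ℤ) : ℝ) + ((k i % 256 : ℤ) : ℝ) = (k i : ℝ) := by
      exact_mod_cast congrArg (fun z : ℤ => (z : ℝ)) hmod
    have hr0R : (0:ℝ) ≤ ((k i % 256 : ℤ) : ℝ) := by exact_mod_cast hr0
    have hr1R : ((k i % 256 : ℤ) : ℝ) < 256 := by exact_mod_cast hr1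
    have h1R : ((k i / 256 : ℤ) : ℝ) + (w i : ℝ) ≤ t := by
      simp only [hfd] at h1; push_cast at h1; exact h1
    have h2R : t < ((k i / 256 : ℤ) : ℝ) + (w i : ℝ) + 1 := by
      simp only [hfd] at h2; push_cast at h2; linarith
    have hai : a i = 256 * t - (k i : ℝ) := by simp only [ha, ht]
    rw [abs_le]
    constructor <;> [skip; skip] <;> nlinarith [h1R, h2R, hr0R, hr1R, hmodR]
  -- Euclidean bound:  enorm2 (a - 256 w) ≤ 256 √n
  have hd : enorm2 (fun i => a i - 256 * wv i) ≤ 256 * Real.sqrt n := by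
    have hsum : ∑ i, (a i - 256 * wv i) ^ 2 ≤ ∑ _i : Fin n, (256:ℝ) ^ 2 :=
      Finset.sum_le_sum fun i _ => by
        have := key i
        nlinarith [abs_nonneg (a i - 256 * wv i), _root_.sq_abs (a i - 256 * wv i)]
    have : enorm2 (fun i => a i - 256 * wv i) ≤ Real.sqrt (n * 256 ^ 2) := by
      rw [enorm2]
      apply Real.sqrt_le_sqrt
      simpa using hsum
    rw [Real.sqrt_mul (Nat.cast_nonneg n), Real.sqrt_sq (by norm_num)] at this
    linarith
  -- triangle inequality: 256 |w| ≤ |a| + 256 √n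
  have htri : 256 * enorm2 wv ≤ enorm2 a + 256 * Real.sqrt n := by
    have h1 : enorm2 (fun i => (256:ℝ) * wv i) = 256 * enorm2 wv := by
      rw [enorm2_smul]; norm_num
    have h2 : (fun i => (256:ℝ) * wv i) =
        fun i => a i + (256 * wv i - a i) := by funext i; ring
    have h3 := enorm2_triangle a (fun i => 256 * wv i - a i)
    have h4 : enorm2 (fun i => 256 * wv i - a i) = enorm2 (fun i => a i - 256 * wv i) := by
      have : (fun i => 256 * wv i - a i) = fun i => (-1 : ℝ) * (a i - 256 * wv i) := by
        funext i; ring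
      rw [this, enorm2_smul]; norm_num
    calc 256 * enorm2 wv = enorm2 (fun i => a i + (256 * wv i - a i)) := by
          rw [← h2, h1]
      _ ≤ enorm2 a + enorm2 (fun i => 256 * wv i - a i) := h3
      _ ≤ enorm2 a + 256 * Real.sqrt n := by rw [h4]; linarith
  set A := enorm2 a
  set W := enorm2 wv
  have hA : 0 ≤ A := enorm2_nonneg a
  have hW : 0 ≤ W := enorm2_nonneg wv
  have hmain : 1 + W ≤ (1 + Real.sqrt n) * (1 + A) := by nlinarith
  have h1A : (0:ℝ) < 1 + A := by linarith
  have h1W : (0:ℝ) < 1 + W := by linarith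
  have hc : (0:ℝ) < 1 + Real.sqrt n := by linarith
  have hstep : ((1 + Real.sqrt n) * (1 + A)) ^ (-N) ≤ (1 + W) ^ (-N) :=
    Real.rpow_le_rpow_of_nonpos h1W hmain (neg_nonpos.mpr hN.le)
  rw [Real.mul_rpow hc.le h1A.le] at hstep
  calc (1 + A) ^ (-N)
      = (1 + Real.sqrt n) ^ N * ((1 + Real.sqrt n) ^ (-N) * (1 + A) ^ (-N)) := by
        rw [← mul_assoc, ← Real.rpow_add hc, add_neg_cancel, Real.rpow_zero, one_mul]
    _ ≤ (1 + Real.sqrt n) ^ N * (1 + W) ^ (-N) := by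
        exact mul_le_mul_of_nonneg_left hstep (Real.rpow_nonneg hc.le N)
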